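/- Let A ∈ ℝ^{n×n}, B^m ∈ ℝ^{n×m}, B^p ∈ ℝ^{n×r}, C ∈ ℝ^{p×n}, and let U ∈ ℝ^{m×N}, W ∈ ℝ^{r×N}, X ∈ ℝ^{n×N} be data matrices such that [U; W; X] has full row rank m + r + n. Define Ẋ := A X + B^m U + B^p W and Ẏ := C Ẋ. Then rank([U; Ẏ; X]) = m + n + rank(C B^p) and rank([U; X; Ẋ]) = m + n + rank(B^p). -/

import Mathlib

open Matrix

lemma myRange_prodMap {R M₁ M₂ M₃ M₄ : Type*} [CommRing R]
    [AddCommGroup M₁] [AddCommGroup M₂] [AddCommGroup M₃] [AddCommGroup M₄]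
    [Module R M₁] [Module R M₂] [Module R M₃] [Module R M₄]
    (f : M₁ →ₗ[R] M₂) (g : M₃ →ₗ[R] M₄) :
    LinearMap.range (f.prodMap g) = (LinearMap.range f).prod (LinearMap.range g) := by
  ext ⟨a, b⟩
  simp only [LinearMap.mem_range, Submodule.mem_prod, LinearMap.prodMap_apply, Prod.mk.injEq,
    Prod.exists]
  constructor
  · rintro ⟨x, y, hx, hy⟩; exact ⟨⟨x, hx⟩, ⟨y, hy⟩⟩
  · rintro ⟨⟨x, hx⟩, ⟨y, hy⟩⟩; exact ⟨x, y, hx, hy⟩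

noncomputable def mySubmoduleProdEquiv {R M N : Type*} [CommRing R] [AddCommGroup M]
    [AddCommGroup N] [Module R M] [Module R N] (p : Submodule R M) (q : Submodule R N) :
    ↥(p.prod q) ≃ₗ[R] ↥p × ↥q where
  toFun x := (⟨x.1.1, x.2.1⟩, ⟨x.1.2, x.2.2⟩)
  invFun x := ⟨(x.1.1, x.2.1), ⟨x.1.2, x.2.2⟩⟩
  left_inv _ := rfl
  right_inv _ := rfl
  map_add' _ _ := rfl
  map_smul' _ _ := rfl

lemma myFinrank_prod {M N : Type*} [AddCommGroup M] [AddCommGroup N] [Module ℝ M] [Module ℝ N]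
    [FiniteDimensional ℝ M] [FiniteDimensional ℝ N] (p : Submodule ℝ M) (q : Submodule ℝ N) :
    Module.finrank ℝ ↥(p.prod q) = Module.finrank ℝ ↥p + Module.finrank ℝ ↥q := by
  rw [(mySubmoduleProdEquiv p q).finrank_eq, Module.finrank_prod]

lemma myRank_fromBlocks_diag {m₁ m₂ n₁ n₂ : Type*} [Fintype m₁] [Fintype m₂] [Fintype n₁]
    [Fintype n₂] (A : Matrix m₁ n₁ ℝ) (D : Matrix m₂ n₂ ℝ) :
    (fromBlocks A 0 0 D).rank = A.rank + D.rank := by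
  have key : (fromBlocks A (0 : Matrix m₁ n₂ ℝ) (0 : Matrix m₂ n₁ ℝ) D).mulVecLin
      = (LinearEquiv.sumArrowLequivProdArrow m₁ m₂ ℝ ℝ).symm.toLinearMap ∘ₗ
          ((A.mulVecLin.prodMap D.mulVecLin) ∘ₗ
            (LinearEquiv.sumArrowLequivProdArrow n₁ n₂ ℝ ℝ).toLinearMap) := by
    apply LinearMap.ext; intro v
    funext i
    cases i <;>
      simp [Matrix.mulVecLin_apply, fromBlocks_mulVec, LinearEquiv.sumArrowLequivProdArrow,
        Equiv.sumArrowEquivProdArrow]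
  rw [Matrix.rank, Matrix.rank, Matrix.rank, key, LinearMap.range_comp,
    LinearMap.range_comp_of_range_eq_top _ (LinearEquiv.range _), myRange_prodMap,
    LinearEquiv.finrank_map_eq, myFinrank_prod]

lemma myRank_mul_full_row_rank {k : Type*} [Fintype k] {N : ℕ}
    (D : Matrix k (Fin N) ℝ) (hD : D.rank = Fintype.card k)
    {q : Type*} [Fintype q] (M : Matrix q k ℝ) : (M * D).rank = M.rank := by
  have htop : LinearMap.range D.mulVecLin = ⊤ := by
    apply Submodule.eq_top_of_finrank_eq
    rw [← Matrix.rank, hD, Module.finrank_fintype_fun_eq_card]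
  rw [Matrix.rank, Matrix.rank, Matrix.mulVecLin_mul,
    LinearMap.range_comp_of_range_eq_top _ htop]

lemma myFromRows_add {m₁ m₂ n R : Type*} [Add R] (A₁ : Matrix m₁ n R) (A₂ : Matrix m₂ n R)
    (B₁ : Matrix m₁ n R) (B₂ : Matrix m₂ n R) :
    fromRows A₁ A₂ + fromRows B₁ B₂ = fromRows (A₁ + B₁) (A₂ + B₂) := by
  ext i j; cases i <;> simp [fromRows_apply_inl, fromRows_apply_inr]

/-- Ranks of the stacked data matrices:
`rank [U; Ẏ; X] = m + n + rank (C Bᵖ)` and `rank [U; X; Ẋ] = m + n + rank Bᵖ`. -/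
theorem stmt9 {n m r pdim N : ℕ}
    (A : Matrix (Fin n) (Fin n) ℝ)
    (Bm : Matrix (Fin n) (Fin m) ℝ) (Bp : Matrix (Fin n) (Fin r) ℝ)
    (C : Matrix (Fin pdim) (Fin n) ℝ)
    (U : Matrix (Fin m) (Fin N) ℝ) (W : Matrix (Fin r) (Fin N) ℝ)
    (X : Matrix (Fin n) (Fin N) ℝ)
    (hrank : (Matrix.fromRows U (Matrix.fromRows W X)).rank = m + r + n)
    (Xdot : Matrix (Fin n) (Fin N) ℝ) (hXdot : Xdot = A * X + Bm * U + Bp * W)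
    (Ydot : Matrix (Fin pdim) (Fin N) ℝ) (hYdot : Ydot = C * Xdot) :
    (Matrix.fromRows U (Matrix.fromRows Ydot X)).rank = m + n + (C * Bp).rank ∧
      (Matrix.fromRows U (Matrix.fromRows X Xdot)).rank = m + n + Bp.rank := by
  set D : Matrix (Fin m ⊕ (Fin r ⊕ Fin n)) (Fin N) ℝ := fromRows U (fromRows W X) with hDdef
  have hD : D.rank = Fintype.card (Fin m ⊕ (Fin r ⊕ Fin n)) := by
    rw [hrank]; simp; omega
  constructor
  · -- first statement
    set M1 : Matrix (Fin m ⊕ (Fin pdim ⊕ Fin n)) (Fin m ⊕ (Fin r ⊕ Fin n)) ℝ :=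
      fromBlocks 1 0 (fromRows (C * Bm) (0 : Matrix (Fin n) (Fin m) ℝ))
        (fromBlocks (C * Bp) (C * A) (0 : Matrix (Fin n) (Fin r) ℝ) 1) with hM1def
    have heq1 : fromRows U (fromRows Ydot X) = M1 * D := by
      rw [hM1def, hDdef, fromBlocks_mul_fromRows, Matrix.fromRows_mul,
        fromBlocks_mul_fromRows, myFromRows_add, hYdot, hXdot]
      simp only [Matrix.one_mul, Matrix.zero_mul, Matrix.mul_zero, add_zero, zero_add,
        Matrix.mul_add]
      rw [← Matrix.mul_assoc, ← Matrix.mul_assoc, ← Matrix.mul_assoc]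
      abel
    have hr1 : (fromRows U (fromRows Ydot X)).rank = M1.rank := by
      rw [heq1]; exact myRank_mul_full_row_rank D hD M1
    set E1 : Matrix (Fin m ⊕ (Fin pdim ⊕ Fin n)) (Fin m ⊕ (Fin pdim ⊕ Fin n)) ℝ :=
      fromBlocks 1 0 (fromRows (-(C * Bm)) 0) (fromBlocks 1 (-(C * A)) 0 1) with hE1def
    have hE1inv : (fromBlocks 1 0 (fromRows (C * Bm) 0) (fromBlocks 1 (C * A) 0 1) : Matrix
        (Fin m ⊕ (Fin pdim ⊕ Fin n)) (Fin m ⊕ (Fin pdim ⊕ Fin n)) ℝ) * E1 = 1 := by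
      rw [hE1def]
      simp [fromBlocks_multiply, fromBlocks_mul_fromRows, myFromRows_add,
        Matrix.fromRows_zero, ← Matrix.fromBlocks_one]
    have hE1det : IsUnit E1.det := Matrix.isUnit_det_of_left_inverse hE1inv
    have hE1M1 : E1 * M1 = fromBlocks 1 0 0 (fromBlocks (C * Bp) 0 0 1) := by
      rw [hE1def, hM1def]
      simp [fromBlocks_multiply, fromBlocks_mul_fromRows, myFromRows_add,
        Matrix.fromRows_zero]
    have : M1.rank = m + ((C * Bp).rank + n) := by
      rw [← Matrix.rank_mul_eq_right_of_isUnit_det E1 M1 hE1det, hE1M1,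
        myRank_fromBlocks_diag, myRank_fromBlocks_diag, Matrix.rank_one, Matrix.rank_one]
      simp
    rw [hr1, this]; omega
  · -- second statement
    set M2 : Matrix (Fin m ⊕ (Fin n ⊕ Fin n)) (Fin m ⊕ (Fin r ⊕ Fin n)) ℝ :=
      fromBlocks 1 0 (fromRows (0 : Matrix (Fin n) (Fin m) ℝ) Bm)
        (fromBlocks (0 : Matrix (Fin n) (Fin r) ℝ) 1 Bp A) with hM2def
    have heq2 : fromRows U (fromRows X Xdot) = M2 * D := by
      rw [hM2def, hDdef, fromBlocks_mul_fromRows, Matrix.fromRows_mul,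
        fromBlocks_mul_fromRows, myFromRows_add, hXdot]
      simp only [Matrix.one_mul, Matrix.zero_mul, Matrix.mul_zero, add_zero, zero_add]
      abel
    have hr2 : (fromRows U (fromRows X Xdot)).rank = M2.rank := by
      rw [heq2]; exact myRank_mul_full_row_rank D hD M2
    set E2 : Matrix (Fin m ⊕ (Fin n ⊕ Fin n)) (Fin m ⊕ (Fin n ⊕ Fin n)) ℝ :=
      fromBlocks 1 0 (fromRows 0 (-Bm)) (fromBlocks 1 0 (-A) 1) with hE2def
    have hE2inv : (fromBlocks 1 0 (fromRows 0 Bm) (fromBlocks 1 0 A 1) : Matrix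
        (Fin m ⊕ (Fin n ⊕ Fin n)) (Fin m ⊕ (Fin n ⊕ Fin n)) ℝ) * E2 = 1 := by
      rw [hE2def]
      simp [fromBlocks_multiply, fromBlocks_mul_fromRows, myFromRows_add,
        Matrix.fromRows_zero, ← Matrix.fromBlocks_one]
    have hE2det : IsUnit E2.det := Matrix.isUnit_det_of_left_inverse hE2inv
    have hE2M2 : E2 * M2 = fromBlocks 1 0 0 (fromBlocks (0 : Matrix (Fin n) (Fin r) ℝ) (1 : Matrix (Fin n) (Fin n) ℝ) Bp (0 : Matrix (Fin n) (Fin n) ℝ)) := by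
      rw [hE2def, hM2def]
      simp [fromBlocks_multiply, fromBlocks_mul_fromRows, myFromRows_add,
        Matrix.fromRows_zero]
    -- swap the two inner row blocks
    set P : Matrix (Fin n ⊕ Fin n) (Fin n ⊕ Fin n) ℝ := fromBlocks 0 1 1 0 with hPdef
    have hPinv : P * P = 1 := by
      rw [hPdef]; simp [fromBlocks_multiply, ← Matrix.fromBlocks_one]
    have hPdet : IsUnit P.det := Matrix.isUnit_det_of_left_inverse hPinv
    have hPK : P * (fromBlocks (0 : Matrix (Fin n) (Fin r) ℝ) (1 : Matrix (Fin n) (Fin n) ℝ) Bp (0 : Matrix (Fin n) (Fin n) ℝ)) =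
        fromBlocks Bp 0 0 1 := by
      rw [hPdef]; simp [fromBlocks_multiply]
    have hKrank : (fromBlocks (0 : Matrix (Fin n) (Fin r) ℝ) (1 : Matrix (Fin n) (Fin n) ℝ) Bp (0 : Matrix (Fin n) (Fin n) ℝ)).rank = Bp.rank + n := by
      rw [← Matrix.rank_mul_eq_right_of_isUnit_det P _ hPdet, hPK,
        myRank_fromBlocks_diag, Matrix.rank_one]
      simp
    have : M2.rank = m + (Bp.rank + n) := by
      rw [← Matrix.rank_mul_eq_right_of_isUnit_det E2 M2 hE2det, hE2M2,
        myRank_fromBlocks_diag, Matrix.rank_one, hKrank]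
      simp
    rw [hr2, this]; omega
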